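/- Let G = {(x,y) ∈ ℝ² : sin(2πx)·sin(2πy) = 0}. There exists a constant C > 0 such that for all x, y ∈ G there is a path γ ∈ H¹([0,1];ℝ²) with γ(0) = x, γ(1) = y, γ(t) ∈ G for every t ∈ [0,1], and length ∫₀¹|γ'(t)|dt ≤ C·|x − y|. -/
import Mathlib


open MeasureTheory Filter
open scoped ENNReal Topology

noncomputable section

abbrev Euc (n : ℕ) : Type := EuclideanSpace ℝ (Fin n)

/-- `u` is an `H¹` curve on `[a,b]` with (a.e.) derivative `u'`. -/
def IsH1On {n : ℕ} (u u' : ℝ → Euc n) (a b : ℝ) : Prop :=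
  IntervalIntegrable u' volume a b ∧
  IntervalIntegrable (fun t => ‖u' t‖ ^ 2) volume a b ∧
  ∀ t ∈ Set.Icc a b, u t = u a + ∫ s in a..t, u' s

/-- The localized homogenization energy `ψ_T^z(w)` (value `⊤` if no admissible curve exists). -/
def psiT {n : ℕ} {α : Type*} (φ : Euc n → α) (z : α) (T : ℝ) (w : Euc n) : ℝ≥0∞ :=
  ENNReal.ofReal (1 / T) *
    sInf {e : ℝ≥0∞ | ∃ u u' : ℝ → Euc n, IsH1On u u' 0 T ∧
      (∀ t ∈ Set.Icc (0 : ℝ) T, φ (u t) = z) ∧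
      ‖u 0‖ ≤ Real.sqrt (n : ℝ) ∧ ‖u T - T • w‖ ≤ Real.sqrt (n : ℝ) ∧
      e = ENNReal.ofReal (∫ t in (0 : ℝ)..T, ‖u' t‖ ^ 2)}

/-- The grid `G = {sin(2πx)·sin(2πy) = 0}`, i.e. the union of all horizontal and
vertical lines with a coordinate in `(1/2)ℤ`. -/
def gridG : Set (Euc 2) :=
  {p : Euc 2 | Real.sin (2 * Real.pi * p 0) * Real.sin (2 * Real.pi * p 1) = 0}

/-! ### Auxiliary machinery -/

/-- A piecewise-constant function with values `a`, `b`, `c` on thirds. -/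
def pcw (a b c : Euc 2) : ℝ → Euc 2 := fun t =>
  if t < 1/3 then a else if t < 2/3 then b else c

lemma pcw_meas (a b c : Euc 2) : Measurable (pcw a b c) := by
  unfold pcw
  refine Measurable.ite (measurableSet_lt measurable_id measurable_const) measurable_const ?_
  exact Measurable.ite (measurableSet_lt measurable_id measurable_const) measurable_const
    measurable_const

lemma pcw_ii (a b c : Euc 2) (r s : ℝ) : IntervalIntegrable (pcw a b c) volume r s := by
  have hb : ∀ t, ‖pcw a b c t‖ ≤ max ‖a‖ (max ‖b‖ ‖c‖) := by
    intro t
    unfold pcw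
    split_ifs <;> simp [le_max_left, le_max_right, le_max_iff, le_refl]
  exact (intervalIntegrable_const (c := max ‖a‖ (max ‖b‖ ‖c‖))).mono_fun
    (pcw_meas a b c).aestronglyMeasurable
    (Filter.Eventually.of_forall fun t => (hb t).trans (le_abs_self _))

lemma ae_ne (r : ℝ) : ∀ᵐ s : ℝ, s ≠ r := by
  have : (volume : Measure ℝ) {r} = 0 := measure_singleton r
  filter_upwards [measure_eq_zero_iff_ae_notMem.mp this] with s hs
  simpa using hs

lemma pcw_ae1 (a b c : Euc 2) (t : ℝ) (ht0 : 0 ≤ t) (ht : t ≤ 1/3) :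
    ∀ᵐ s : ℝ, s ∈ Set.uIoc (0:ℝ) t → pcw a b c s = a := by
  filter_upwards [ae_ne (1/3)] with s hs hmem
  rw [Set.uIoc_of_le ht0] at hmem
  have h : s < 1/3 := lt_of_le_of_ne (hmem.2.trans ht) hs
  simp only [pcw]; rw [if_pos h]

lemma pcw_ae2 (a b c : Euc 2) (t : ℝ) (ht0 : 1/3 ≤ t) (ht : t ≤ 2/3) :
    ∀ᵐ s : ℝ, s ∈ Set.uIoc (1/3:ℝ) t → pcw a b c s = b := by
  filter_upwards [ae_ne (2/3)] with s hs hmem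
  rw [Set.uIoc_of_le ht0] at hmem
  have h1 : ¬ s < 1/3 := not_lt.mpr hmem.1.le
  have h2 : s < 2/3 := lt_of_le_of_ne (hmem.2.trans ht) hs
  simp only [pcw]; rw [if_neg h1, if_pos h2]

lemma pcw_ae3 (a b c : Euc 2) (t : ℝ) (ht0 : 2/3 ≤ t) :
    ∀ᵐ s : ℝ, s ∈ Set.uIoc (2/3:ℝ) t → pcw a b c s = c := by
  filter_upwards with s hmem
  rw [Set.uIoc_of_le ht0] at hmem
  have h1 : ¬ s < 1/3 := by push_neg; linarith [hmem.1]
  have h2 : ¬ s < 2/3 := not_lt.mpr hmem.1.le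
  simp only [pcw]; rw [if_neg h1, if_neg h2]

lemma pcw_int1 (a b c : Euc 2) (t : ℝ) (ht0 : 0 ≤ t) (ht : t ≤ 1/3) :
    ∫ s in (0:ℝ)..t, pcw a b c s = t • a := by
  rw [intervalIntegral.integral_congr_ae (g := fun _ => a) (pcw_ae1 a b c t ht0 ht),
    intervalIntegral.integral_const]
  simp

lemma pcw_int2 (a b c : Euc 2) (t : ℝ) (ht0 : 1/3 ≤ t) (ht : t ≤ 2/3) :
    ∫ s in (0:ℝ)..t, pcw a b c s = ((1:ℝ)/3) • a + (t - 1/3) • b := by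
  rw [← intervalIntegral.integral_add_adjacent_intervals (b := (1/3:ℝ))
    (pcw_ii a b c 0 (1/3)) (pcw_ii a b c (1/3) t)]
  rw [pcw_int1 a b c (1/3) (by norm_num) le_rfl,
    intervalIntegral.integral_congr_ae (g := fun _ => b) (pcw_ae2 a b c t ht0 ht),
    intervalIntegral.integral_const]

lemma pcw_int3 (a b c : Euc 2) (t : ℝ) (ht0 : 2/3 ≤ t) :
    ∫ s in (0:ℝ)..t, pcw a b c s = ((1:ℝ)/3) • a + ((1:ℝ)/3) • b + (t - 2/3) • c := by
  rw [← intervalIntegral.integral_add_adjacent_intervals (b := (2/3:ℝ))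
    (pcw_ii a b c 0 (2/3)) (pcw_ii a b c (2/3) t)]
  rw [pcw_int2 a b c (2/3) (by norm_num) le_rfl,
    intervalIntegral.integral_congr_ae (g := fun _ => c) (pcw_ae3 a b c t ht0),
    intervalIntegral.integral_const]
  have h : (2/3 - 1/3 : ℝ) = 1/3 := by norm_num
  rw [h]

lemma pcw_norm_ii (a b c : Euc 2) (r s : ℝ) :
    IntervalIntegrable (fun t => ‖pcw a b c t‖) volume r s :=
  (pcw_ii a b c r s).norm

lemma pcw_len (a b c : Euc 2) :
    ∫ t in (0:ℝ)..1, ‖pcw a b c t‖ = (1/3) * ‖a‖ + (1/3) * ‖b‖ + (1/3) * ‖c‖ := by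
  have e1 : ∫ t in (0:ℝ)..(1/3), ‖pcw a b c t‖ = (1/3) * ‖a‖ := by
    rw [intervalIntegral.integral_congr_ae (g := fun _ => ‖a‖)
      (by filter_upwards [pcw_ae1 a b c (1/3) (by norm_num) le_rfl] with s hs hm; rw [hs hm]),
      intervalIntegral.integral_const]
    norm_num
  have e2 : ∫ t in (1/3:ℝ)..(2/3), ‖pcw a b c t‖ = (1/3) * ‖b‖ := by
    rw [intervalIntegral.integral_congr_ae (g := fun _ => ‖b‖)
      (by filter_upwards [pcw_ae2 a b c (2/3) (by norm_num) le_rfl] with s hs hm; rw [hs hm]),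
      intervalIntegral.integral_const]
    norm_num
  have e3 : ∫ t in (2/3:ℝ)..1, ‖pcw a b c t‖ = (1/3) * ‖c‖ := by
    rw [intervalIntegral.integral_congr_ae (g := fun _ => ‖c‖)
      (by filter_upwards [pcw_ae3 a b c 1 (by norm_num)] with s hs hm; rw [hs hm]),
      intervalIntegral.integral_const]
    norm_num
  rw [← intervalIntegral.integral_add_adjacent_intervals (b := (1/3:ℝ))
    (pcw_norm_ii a b c 0 (1/3)) (pcw_norm_ii a b c (1/3) 1),
    ← intervalIntegral.integral_add_adjacent_intervals (b := (2/3:ℝ))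
    (pcw_norm_ii a b c (1/3) (2/3)) (pcw_norm_ii a b c (2/3) 1), e1, e2, e3]
  ring

lemma pcw_sq_ii (a b c : Euc 2) (r s : ℝ) :
    IntervalIntegrable (fun t => ‖pcw a b c t‖ ^ 2) volume r s := by
  set M := max ‖a‖ (max ‖b‖ ‖c‖) with hM
  have hb : ∀ t, ‖pcw a b c t‖ ^ 2 ≤ M ^ 2 := by
    intro t
    have h0 : (0:ℝ) ≤ ‖pcw a b c t‖ := norm_nonneg _
    have : ‖pcw a b c t‖ ≤ M := by
      unfold pcw; split_ifs <;> simp [hM, le_max_left, le_max_right, le_max_iff, le_refl]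
    nlinarith
  have hm : Measurable fun t => ‖pcw a b c t‖ ^ 2 :=
    ((pcw_meas a b c).norm).pow_const 2
  refine (intervalIntegrable_const (c := M ^ 2)).mono_fun hm.aestronglyMeasurable
    (Filter.Eventually.of_forall fun t => ?_)
  simp only [Real.norm_eq_abs]
  rw [abs_of_nonneg (by positivity : (0:ℝ) ≤ ‖pcw a b c t‖ ^ 2),
    abs_of_nonneg (by positivity : (0:ℝ) ≤ M ^ 2)]
  exact hb t

/-- A three-segment polyline through `p₀ p₁ p₂ p₃`, each segment staying in the grid,
is an `H¹` path in the grid of length the sum of the segment lengths. -/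
lemma polyline (p₀ p₁ p₂ p₃ : Euc 2)
    (h01 : ∀ s ∈ Set.Icc (0:ℝ) 1, p₀ + s • (p₁ - p₀) ∈ gridG)
    (h12 : ∀ s ∈ Set.Icc (0:ℝ) 1, p₁ + s • (p₂ - p₁) ∈ gridG)
    (h23 : ∀ s ∈ Set.Icc (0:ℝ) 1, p₂ + s • (p₃ - p₂) ∈ gridG) :
    ∃ γ γ' : ℝ → Euc 2, IsH1On γ γ' 0 1 ∧ γ 0 = p₀ ∧ γ 1 = p₃ ∧
      (∀ t ∈ Set.Icc (0:ℝ) 1, γ t ∈ gridG) ∧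
      (∫ t in (0:ℝ)..1, ‖γ' t‖) = ‖p₁ - p₀‖ + ‖p₂ - p₁‖ + ‖p₃ - p₂‖ := by
  set a := (3:ℝ) • (p₁ - p₀) with ha
  set b := (3:ℝ) • (p₂ - p₁) with hb
  set c := (3:ℝ) • (p₃ - p₂) with hc
  set γ' := pcw a b c with hγ'
  set γ : ℝ → Euc 2 := fun t => p₀ + ∫ s in (0:ℝ)..t, γ' s with hγ
  have hγ0 : γ 0 = p₀ := by simp [hγ]
  have key : ∀ t ∈ Set.Icc (0:ℝ) 1,
      (t ≤ 1/3 → γ t = p₀ + (3*t) • (p₁ - p₀)) ∧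
      (1/3 ≤ t → t ≤ 2/3 → γ t = p₁ + (3*t - 1) • (p₂ - p₁)) ∧
      (2/3 ≤ t → γ t = p₂ + (3*t - 2) • (p₃ - p₂)) := by
    intro t ht
    refine ⟨fun h1 => ?_, fun h1 h2 => ?_, fun h1 => ?_⟩
    · rw [hγ]; simp only
      rw [pcw_int1 a b c t ht.1 h1, ha, smul_smul, mul_comm]
    · rw [hγ]; simp only
      rw [pcw_int2 a b c t h1 h2, ha, hb]
      module
    · rw [hγ]; simp only
      rw [pcw_int3 a b c t h1, ha, hb, hc]
      module
  have hγ1 : γ 1 = p₃ := by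
    have := ((key 1 (by norm_num)).2.2 (by norm_num))
    rw [this]
    module
  refine ⟨γ, γ', ⟨pcw_ii a b c 0 1, pcw_sq_ii a b c 0 1, fun t ht => by rw [hγ0]⟩,
    hγ0, hγ1, ?_, ?_⟩
  · intro t ht
    rcases le_or_gt t (1/3) with h | h
    · rw [(key t ht).1 h]
      exact h01 (3*t) ⟨by linarith [ht.1], by linarith⟩
    rcases le_or_gt t (2/3) with h2 | h2
    · rw [(key t ht).2.1 h.le h2]
      exact h12 (3*t - 1) ⟨by linarith, by linarith⟩
    · rw [(key t ht).2.2 h2.le]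
      exact h23 (3*t - 2) ⟨by linarith, by linarith [ht.2]⟩
  · rw [hγ', pcw_len, ha, hb, hc]
    have h3 : ∀ v : Euc 2, ‖(3:ℝ) • v‖ = 3 * ‖v‖ := by
      intro v; rw [norm_smul]; norm_num
    rw [h3, h3, h3]
    ring

/-! ### Grid geometry helpers -/

def pt (a b : ℝ) : Euc 2 := (WithLp.equiv 2 _).symm ![a, b]

lemma pt_apply0 (a b : ℝ) : pt a b 0 = a := by simp [pt]
lemma pt_apply1 (a b : ℝ) : pt a b 1 = b := by simp [pt]

lemma seg_mem_v (p q : Euc 2) (hpq : p 0 = q 0) (h0 : Real.sin (2 * Real.pi * p 0) = 0) :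
    ∀ s ∈ Set.Icc (0:ℝ) 1, p + s • (q - p) ∈ gridG := by
  intro s _
  have hc : (p + s • (q - p)) 0 = p 0 := by
    simp only [PiLp.add_apply, PiLp.smul_apply, PiLp.sub_apply, smul_eq_mul, ← hpq]
    ring
  show Real.sin _ * Real.sin _ = 0
  rw [hc, h0, zero_mul]

lemma seg_mem_h (p q : Euc 2) (hpq : p 1 = q 1) (h1 : Real.sin (2 * Real.pi * p 1) = 0) :
    ∀ s ∈ Set.Icc (0:ℝ) 1, p + s • (q - p) ∈ gridG := by
  intro s _
  have hc : (p + s • (q - p)) 1 = p 1 := by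
    simp only [PiLp.add_apply, PiLp.smul_apply, PiLp.sub_apply, smul_eq_mul, ← hpq]
    ring
  show Real.sin _ * Real.sin _ = 0
  rw [hc, h1, mul_zero]

lemma norm_of_fst_zero (v : Euc 2) (hv : v 0 = 0) : ‖v‖ = |v 1| := by
  rw [EuclideanSpace.norm_eq]
  simp [Fin.sum_univ_two, hv, Real.sqrt_sq_eq_abs]

lemma norm_of_snd_zero (v : Euc 2) (hv : v 1 = 0) : ‖v‖ = |v 0| := by
  rw [EuclideanSpace.norm_eq]
  simp [Fin.sum_univ_two, hv, Real.sqrt_sq_eq_abs]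

lemma abs_coord_le (v : Euc 2) (i : Fin 2) : |v i| ≤ ‖v‖ := by
  rw [EuclideanSpace.norm_eq, ← Real.sqrt_sq_eq_abs]
  apply Real.sqrt_le_sqrt
  fin_cases i <;> simp [Fin.sum_univ_two] <;> positivity

lemma sin_two_pi_eq_zero_iff' (x : ℝ) (h : Real.sin (2 * Real.pi * x) = 0) :
    ∃ k : ℤ, x = k / 2 := by
  rw [Real.sin_eq_zero_iff] at h
  obtain ⟨n, hn⟩ := h
  refine ⟨n, ?_⟩
  have hpi := Real.pi_pos
  have h2 : (n:ℝ) * Real.pi = (2 * x) * Real.pi := by linarith [hn]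
  have := mul_right_cancel₀ (ne_of_gt hpi) h2
  linarith

lemma sin_two_pi_half (k : ℤ) : Real.sin (2 * Real.pi * ((k : ℝ) / 2)) = 0 := by
  have h : 2 * Real.pi * ((k:ℝ)/2) = k * Real.pi := by ring
  rw [h, Real.sin_int_mul_pi]

lemma half_int_gap (k m : ℤ) (h : (k:ℝ)/2 ≠ (m:ℝ)/2) : (1:ℝ)/2 ≤ |(k:ℝ)/2 - m/2| := by
  have hkm : k ≠ m := by rintro rfl; exact h rfl
  have h1 : (1:ℝ) ≤ |(k:ℝ) - m| := by
    rw [← Int.cast_sub, ← Int.cast_abs]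
    exact_mod_cast Int.one_le_abs (sub_ne_zero.mpr hkm)
  rw [div_sub_div_same, abs_div, abs_of_pos (by norm_num : (0:ℝ) < 2)]
  linarith

lemma round_half_close (x : ℝ) : |x - ((round (2*x) : ℤ) : ℝ)/2| ≤ 1/4 := by
  have h := abs_sub_round (2*x)
  have h2 : x - ((round (2*x):ℤ):ℝ)/2 = (2*x - round (2*x))/2 := by ring
  rw [h2, abs_div, abs_of_pos (by norm_num : (0:ℝ) < 2)]
  linarith

/-- Controlled-length property of the grid: any two points of `G` are joined by an
`H¹` path in `G` of length at most `C` times their Euclidean distance. -/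
theorem grid_controlled_length :
    ∃ C : ℝ, 0 < C ∧ ∀ x y : Euc 2, x ∈ gridG → y ∈ gridG →
      ∃ γ γ' : ℝ → Euc 2, IsH1On γ γ' 0 1 ∧ γ 0 = x ∧ γ 1 = y ∧
        (∀ t ∈ Set.Icc (0 : ℝ) 1, γ t ∈ gridG) ∧
        (∫ t in (0 : ℝ)..1, ‖γ' t‖) ≤ C * ‖x - y‖ := by
  refine ⟨3, by norm_num, fun x y hx hy => ?_⟩
  have hd0 : |x 0 - y 0| ≤ ‖x - y‖ := by
    have := abs_coord_le (x - y) 0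
    simpa [PiLp.sub_apply] using this
  have hd1 : |x 1 - y 1| ≤ ‖x - y‖ := by
    have := abs_coord_le (x - y) 1
    simpa [PiLp.sub_apply] using this
  have hnn : (0:ℝ) ≤ ‖x - y‖ := norm_nonneg _
  rcases mul_eq_zero.mp hx with hx0 | hx1 <;> rcases mul_eq_zero.mp hy with hy0 | hy1
  · -- both vertical
    by_cases he : x 0 = y 0
    · obtain ⟨γ, γ', H1, H2, H3, H4, H5⟩ := polyline x x y y
        (seg_mem_v x x rfl hx0) (seg_mem_v x y he hx0) (seg_mem_v y y rfl hy0)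
      refine ⟨γ, γ', H1, H2, H3, H4, ?_⟩
      rw [H5]
      have : ‖y - x‖ = ‖x - y‖ := norm_sub_rev y x
      simp only [sub_self, norm_zero]
      linarith
    · set h : ℝ := ((round (2 * x 1) : ℤ) : ℝ) / 2 with hh
      set p₁ := pt (x 0) h with hp₁
      set p₂ := pt (y 0) h with hp₂
      obtain ⟨γ, γ', H1, H2, H3, H4, H5⟩ := polyline x p₁ p₂ y
        (seg_mem_v x p₁ (pt_apply0 _ _).symm hx0)
        (seg_mem_h p₁ p₂ (by rw [hp₁, hp₂, pt_apply1, pt_apply1])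
          (by rw [hp₁, pt_apply1, hh]; exact sin_two_pi_half _))
        (seg_mem_v p₂ y (by rw [hp₂, pt_apply0]) (by rw [hp₂, pt_apply0]; exact hy0))
      refine ⟨γ, γ', H1, H2, H3, H4, ?_⟩
      rw [H5]
      have l1 : ‖p₁ - x‖ = |h - x 1| := by
        rw [norm_of_fst_zero (p₁ - x) (by simp [PiLp.sub_apply, hp₁, pt_apply0])]
        simp [PiLp.sub_apply, hp₁, pt_apply1]
      have l2 : ‖p₂ - p₁‖ = |y 0 - x 0| := by
        rw [norm_of_snd_zero (p₂ - p₁) (by simp [PiLp.sub_apply, hp₁, hp₂, pt_apply1])]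
        simp [PiLp.sub_apply, hp₁, hp₂, pt_apply0]
      have l3 : ‖y - p₂‖ = |y 1 - h| := by
        rw [norm_of_fst_zero (y - p₂) (by simp [PiLp.sub_apply, hp₂, pt_apply0])]
        simp [PiLp.sub_apply, hp₂, pt_apply1]
      have r1 : |x 1 - h| ≤ 1/4 := by rw [hh]; exact round_half_close (x 1)
      have r1' : |h - x 1| ≤ 1/4 := by rwa [abs_sub_comm]
      have r3 : |y 1 - h| ≤ |y 1 - x 1| + |x 1 - h| := abs_sub_le _ _ _
      have hy1x1 : |y 1 - x 1| = |x 1 - y 1| := abs_sub_comm _ _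
      have hy0x0 : |y 0 - x 0| = |x 0 - y 0| := abs_sub_comm _ _
      -- the gap bound
      obtain ⟨k, hk⟩ := sin_two_pi_eq_zero_iff' _ hx0
      obtain ⟨m, hm⟩ := sin_two_pi_eq_zero_iff' _ hy0
      have hgap : (1:ℝ)/2 ≤ |x 0 - y 0| := by
        rw [hk, hm]
        exact half_int_gap k m (by rw [← hk, ← hm]; exact he)
      rw [l1, l2, l3]
      linarith
  · -- x vertical, y horizontal
    set p : Euc 2 := pt (x 0) (y 1) with hp
    obtain ⟨γ, γ', H1, H2, H3, H4, H5⟩ := polyline x p p y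
      (seg_mem_v x p (pt_apply0 _ _).symm hx0)
      (seg_mem_v p p rfl (by rw [hp, pt_apply0]; exact hx0))
      (seg_mem_h p y (by rw [hp, pt_apply1]) (by rw [hp, pt_apply1]; exact hy1))
    refine ⟨γ, γ', H1, H2, H3, H4, ?_⟩
    rw [H5]
    have l1 : ‖p - x‖ = |y 1 - x 1| := by
      rw [norm_of_fst_zero (p - x) (by simp [PiLp.sub_apply, hp, pt_apply0])]
      simp [PiLp.sub_apply, hp, pt_apply1]
    have l3 : ‖y - p‖ = |y 0 - x 0| := by
      rw [norm_of_snd_zero (y - p) (by simp [PiLp.sub_apply, hp, pt_apply1])]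
      simp [PiLp.sub_apply, hp, pt_apply0]
    have hy1x1 : |y 1 - x 1| = |x 1 - y 1| := abs_sub_comm _ _
    have hy0x0 : |y 0 - x 0| = |x 0 - y 0| := abs_sub_comm _ _
    rw [l1, l3, sub_self, norm_zero]
    linarith
  · -- x horizontal, y vertical
    set p : Euc 2 := pt (y 0) (x 1) with hp
    obtain ⟨γ, γ', H1, H2, H3, H4, H5⟩ := polyline x p p y
      (seg_mem_h x p (pt_apply1 _ _).symm hx1)
      (seg_mem_h p p rfl (by rw [hp, pt_apply1]; exact hx1))
      (seg_mem_v p y (by rw [hp, pt_apply0]) (by rw [hp, pt_apply0]; exact hy0))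
    refine ⟨γ, γ', H1, H2, H3, H4, ?_⟩
    rw [H5]
    have l1 : ‖p - x‖ = |y 0 - x 0| := by
      rw [norm_of_snd_zero (p - x) (by simp [PiLp.sub_apply, hp, pt_apply1])]
      simp [PiLp.sub_apply, hp, pt_apply0]
    have l3 : ‖y - p‖ = |y 1 - x 1| := by
      rw [norm_of_fst_zero (y - p) (by simp [PiLp.sub_apply, hp, pt_apply0])]
      simp [PiLp.sub_apply, hp, pt_apply1]
    have hy1x1 : |y 1 - x 1| = |x 1 - y 1| := abs_sub_comm _ _
    have hy0x0 : |y 0 - x 0| = |x 0 - y 0| := abs_sub_comm _ _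
    rw [l1, l3, sub_self, norm_zero]
    linarith
  · -- both horizontal
    by_cases he : x 1 = y 1
    · obtain ⟨γ, γ', H1, H2, H3, H4, H5⟩ := polyline x x y y
        (seg_mem_h x x rfl hx1) (seg_mem_h x y he hx1) (seg_mem_h y y rfl hy1)
      refine ⟨γ, γ', H1, H2, H3, H4, ?_⟩
      rw [H5]
      have : ‖y - x‖ = ‖x - y‖ := norm_sub_rev y x
      simp only [sub_self, norm_zero]
      linarith
    · set h : ℝ := ((round (2 * x 0) : ℤ) : ℝ) / 2 with hh
      set p₁ := pt h (x 1) with hp₁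
      set p₂ := pt h (y 1) with hp₂
      obtain ⟨γ, γ', H1, H2, H3, H4, H5⟩ := polyline x p₁ p₂ y
        (seg_mem_h x p₁ (pt_apply1 _ _).symm hx1)
        (seg_mem_v p₁ p₂ (by rw [hp₁, hp₂, pt_apply0, pt_apply0])
          (by rw [hp₁, pt_apply0, hh]; exact sin_two_pi_half _))
        (seg_mem_h p₂ y (by rw [hp₂, pt_apply1]) (by rw [hp₂, pt_apply1]; exact hy1))
      refine ⟨γ, γ', H1, H2, H3, H4, ?_⟩
      rw [H5]
      have l1 : ‖p₁ - x‖ = |h - x 0| := by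
        rw [norm_of_snd_zero (p₁ - x) (by simp [PiLp.sub_apply, hp₁, pt_apply1])]
        simp [PiLp.sub_apply, hp₁, pt_apply0]
      have l2 : ‖p₂ - p₁‖ = |y 1 - x 1| := by
        rw [norm_of_fst_zero (p₂ - p₁) (by simp [PiLp.sub_apply, hp₁, hp₂, pt_apply0])]
        simp [PiLp.sub_apply, hp₁, hp₂, pt_apply1]
      have l3 : ‖y - p₂‖ = |y 0 - h| := by
        rw [norm_of_snd_zero (y - p₂) (by simp [PiLp.sub_apply, hp₂, pt_apply1])]
        simp [PiLp.sub_apply, hp₂, pt_apply0]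
      have r1 : |x 0 - h| ≤ 1/4 := by rw [hh]; exact round_half_close (x 0)
      have r1' : |h - x 0| ≤ 1/4 := by rwa [abs_sub_comm]
      have r3 : |y 0 - h| ≤ |y 0 - x 0| + |x 0 - h| := abs_sub_le _ _ _
      have hy1x1 : |y 1 - x 1| = |x 1 - y 1| := abs_sub_comm _ _
      have hy0x0 : |y 0 - x 0| = |x 0 - y 0| := abs_sub_comm _ _
      obtain ⟨k, hk⟩ := sin_two_pi_eq_zero_iff' _ hx1
      obtain ⟨m, hm⟩ := sin_two_pi_eq_zero_iff' _ hy1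
      have hgap : (1:ℝ)/2 ≤ |x 1 - y 1| := by
        rw [hk, hm]
        exact half_int_gap k m (by rw [← hk, ← hm]; exact he)
      rw [l1, l2, l3]
      linarith
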